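/- Let G be a K × n matrix over 𝔽₂ with K ≤ n whose entries are i.i.d. uniform Bernoulli. Then the probability that G has rank K is at least 1 − 2^(K − n); in particular it tends to 1 as n − K → ∞. -/

import Mathlib

open Finset

lemma count_ker (K n : ℕ) (x : Fin K → ZMod 2) (hx : x ≠ 0) :
    (Finset.univ.filter
      (fun G : Matrix (Fin K) (Fin n) (ZMod 2) => ∀ j, ∑ i, x i * G i j = 0)).card
      ≤ 2 ^ ((K - 1) * n) := by
  obtain ⟨i₀, hi₀⟩ : ∃ i, x i ≠ 0 := by
    by_contra h; push_neg at h; exact hx (funext h)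
  have hxi : x i₀ = 1 := by
    have : ∀ a : ZMod 2, a ≠ 0 → a = 1 := by decide
    exact this _ hi₀
  classical
  have hcard : (2 : ℕ) ^ ((K-1)*n)
      = Fintype.card ({i : Fin K // i ≠ i₀} → Fin n → ZMod 2) := by
    simp [Fintype.card_fun, ← pow_mul, Fintype.card_subtype_compl, mul_comm]
  rw [hcard, ← Fintype.card_coe]
  refine Fintype.card_le_of_injective
    (fun G => fun (i : {i : Fin K // i ≠ i₀}) j => (G : Matrix (Fin K) (Fin n) (ZMod 2)) i j) ?_
  rintro ⟨G, hG⟩ ⟨G', hG'⟩ h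
  simp only [mem_filter, mem_univ, true_and] at hG hG'
  have hrow : ∀ i, i ≠ i₀ → ∀ j, G i j = G' i j := fun i hi j =>
    congrFun (congrFun h ⟨i, hi⟩) j
  have key : ∀ (H : Matrix (Fin K) (Fin n) (ZMod 2)), (∀ j, ∑ i, x i * H i j = 0) →
      ∀ j, H i₀ j = ∑ i ∈ univ.erase i₀, x i * H i j := by
    intro H hH j
    have h1 := hH j
    rw [← Finset.add_sum_erase _ _ (mem_univ i₀), hxi, one_mul] at h1
    have h2 : H i₀ j = -(∑ i ∈ univ.erase i₀, x i * H i j) := by linear_combination h1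
    rw [h2, CharTwo.neg_eq]
  apply Subtype.ext
  funext i j
  show G i j = G' i j
  by_cases hi : i = i₀
  · subst hi
    rw [key G hG j, key G' hG' j]
    exact Finset.sum_congr rfl fun i hi => by
      rw [hrow i (Finset.mem_erase.mp hi).1 j]
  · exact hrow i hi j

open Finset
open scoped Classical

lemma lin_indep_subset (K n : ℕ) :
    (Finset.univ.filter
      (fun G : Matrix (Fin K) (Fin n) (ZMod 2) =>
        LinearIndependent (ZMod 2) (fun i => G i))) ⊆
    (Finset.univ.filter (fun G : Matrix (Fin K) (Fin n) (ZMod 2) => G.rank = K)) := by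
  intro G hG
  simp only [mem_filter, mem_univ, true_and] at hG ⊢
  have := hG.rank_matrix
  simpa using this

lemma bad_subset (K n : ℕ) :
    (Finset.univ.filter
      (fun G : Matrix (Fin K) (Fin n) (ZMod 2) =>
        ¬ LinearIndependent (ZMod 2) (fun i => G i))) ⊆
    (Finset.univ.filter (fun x : Fin K → ZMod 2 => x ≠ 0)).biUnion
      (fun x => Finset.univ.filter
        (fun G : Matrix (Fin K) (Fin n) (ZMod 2) => ∀ j, ∑ i, x i * G i j = 0)) := by
  intro G hG
  simp only [mem_filter, mem_univ, true_and] at hG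
  rw [Fintype.linearIndependent_iff] at hG
  push_neg at hG
  obtain ⟨g, hsum, i, hgi⟩ := hG
  refine Finset.mem_biUnion.mpr ⟨g, ?_, ?_⟩
  · simp only [mem_filter, mem_univ, true_and]
    intro h0; exact hgi (by rw [h0]; rfl)
  · simp only [mem_filter, mem_univ, true_and]
    intro j
    have := congrFun hsum j
    simpa [Finset.sum_apply] using this

/-- A uniformly random K × n matrix over 𝔽₂ with K ≤ n has rank K with probability at
least 1 − 2^(K−n). The uniform distribution on matrices corresponds to i.i.d. uniform
Bernoulli entries. -/
theorem stmt5 (K n : ℕ) (hKn : K ≤ n) :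
    (1 : ℝ) - (2 : ℝ) ^ ((K : ℤ) - (n : ℤ)) ≤
      ((Finset.univ.filter
          (fun G : Matrix (Fin K) (Fin n) (ZMod 2) => G.rank = K)).card : ℝ) /
        (Fintype.card (Matrix (Fin K) (Fin n) (ZMod 2)) : ℝ) := by
  classical
  have htot : Fintype.card (Matrix (Fin K) (Fin n) (ZMod 2)) = 2 ^ (K * n) := by
    rw [Fintype.card_eq_nat_card]; simp [Matrix, Nat.card_fun, ← pow_mul, mul_comm]
  rcases Nat.eq_zero_or_pos K with hK0 | hK1
  · subst hK0
    have hfull : (Finset.univ.filter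
        (fun G : Matrix (Fin 0) (Fin n) (ZMod 2) => G.rank = 0)) = Finset.univ := by
      apply Finset.filter_true_of_mem
      intro G _
      have := G.rank_le_card_height
      simpa using this
    rw [hfull]
    rw [show ((Finset.univ : Finset (Matrix (Fin 0) (Fin n) (ZMod 2))).card : ℝ)
        = (Fintype.card (Matrix (Fin 0) (Fin n) (ZMod 2)) : ℝ) by rw [Finset.card_univ]]
    rw [div_self (by positivity)]
    have : (0:ℝ) < (2 : ℝ) ^ ((0 : ℤ) - (n : ℤ)) := by positivity
    push_cast
    linarith
  · -- main case
    set good := (Finset.univ.filter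
        (fun G : Matrix (Fin K) (Fin n) (ZMod 2) => G.rank = K)) with hgood
    set L := (Finset.univ.filter
        (fun G : Matrix (Fin K) (Fin n) (ZMod 2) =>
          LinearIndependent (ZMod 2) (fun i => G i))) with hL
    set Bad := (Finset.univ.filter
        (fun G : Matrix (Fin K) (Fin n) (ZMod 2) =>
          ¬ LinearIndependent (ZMod 2) (fun i => G i))) with hBad
    have hBcard : Bad.card ≤ 2 ^ K * 2 ^ ((K - 1) * n) := by
      calc Bad.card ≤ ∑ x ∈ (Finset.univ.filter (fun x : Fin K → ZMod 2 => x ≠ 0)),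
            (Finset.univ.filter
              (fun G : Matrix (Fin K) (Fin n) (ZMod 2) => ∀ j, ∑ i, x i * G i j = 0)).card :=
          le_trans (Finset.card_le_card (bad_subset K n)) (Finset.card_biUnion_le)
        _ ≤ ∑ _x ∈ (Finset.univ.filter (fun x : Fin K → ZMod 2 => x ≠ 0)), 2 ^ ((K-1)*n) := by
            apply Finset.sum_le_sum
            intro x hx
            exact count_ker K n x (by simpa using (Finset.mem_filter.mp hx).2)
        _ ≤ 2 ^ K * 2 ^ ((K - 1) * n) := by
            rw [Finset.sum_const, smul_eq_mul]
            apply Nat.mul_le_mul_right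
            calc (Finset.univ.filter (fun x : Fin K → ZMod 2 => x ≠ 0)).card
                ≤ (Finset.univ : Finset (Fin K → ZMod 2)).card := Finset.card_le_card
                  (Finset.filter_subset _ _)
              _ = 2 ^ K := by rw [Finset.card_univ, Fintype.card_fun]; simp
    have hLcard : 2 ^ (K * n) - 2 ^ K * 2 ^ ((K - 1) * n) ≤ L.card := by
      have hsum : L.card + Bad.card
          = (Finset.univ : Finset (Matrix (Fin K) (Fin n) (ZMod 2))).card :=
        Finset.card_filter_add_card_filter_not _
      have huniv : (Finset.univ : Finset (Matrix (Fin K) (Fin n) (ZMod 2))).card = 2 ^ (K*n) := by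
        rw [Finset.card_univ, htot]
      omega
    have hgoodcard : 2 ^ (K * n) - 2 ^ K * 2 ^ ((K - 1) * n) ≤ good.card :=
      le_trans hLcard (Finset.card_le_card (lin_indep_subset K n))
    rw [htot, le_div_iff₀ (by positivity)]
    -- the real-number estimate
    have hcast : ((2:ℝ) ^ (K*n) - 2 ^ K * 2 ^ ((K-1)*n)) ≤ (good.card : ℝ) := by
      have hle : ((2 ^ (K * n) - 2 ^ K * 2 ^ ((K - 1) * n) : ℕ) : ℝ) ≤ (good.card : ℝ) := by
        exact_mod_cast hgoodcard
      calc ((2:ℝ) ^ (K*n) - 2 ^ K * 2 ^ ((K-1)*n))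
          ≤ ((2 ^ (K * n) - 2 ^ K * 2 ^ ((K - 1) * n) : ℕ) : ℝ) := by
            rcases le_or_gt (2 ^ K * 2 ^ ((K - 1) * n)) (2 ^ (K*n)) with h | h
            · rw [Nat.cast_sub h]; push_cast; linarith
            · have : ((2:ℝ) ^ (K*n)) < 2 ^ K * 2 ^ ((K-1)*n) := by exact_mod_cast h
              have : (0:ℝ) ≤ ((2 ^ (K * n) - 2 ^ K * 2 ^ ((K - 1) * n) : ℕ) : ℝ) :=
                Nat.cast_nonneg _
              linarith
        _ ≤ (good.card : ℝ) := hle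
    push_cast
    refine le_trans ?_ hcast
    -- (1 - 2^(K-n)) * 2^(K*n) ≤ 2^(K*n) - 2^K * 2^((K-1)*n)
    have hexp : (2:ℝ) ^ ((K:ℤ) - n) * 2 ^ (K*n) = 2 ^ K * 2 ^ ((K-1)*n) := by
      rw [show ((2:ℝ) ^ (K*n)) = (2:ℝ) ^ ((K*n : ℕ) : ℤ) by rw [zpow_natCast],
          show ((2:ℝ) ^ K) = (2:ℝ) ^ ((K : ℕ) : ℤ) by rw [zpow_natCast],
          show ((2:ℝ) ^ ((K-1)*n)) = (2:ℝ) ^ (((K-1)*n : ℕ) : ℤ) by rw [zpow_natCast],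
          ← zpow_add₀ (by norm_num : (2:ℝ) ≠ 0), ← zpow_add₀ (by norm_num : (2:ℝ) ≠ 0)]
      congr 1
      have : ((K - 1 : ℕ) : ℤ) = (K : ℤ) - 1 := by
        exact_mod_cast Nat.cast_sub hK1
      push_cast [this]
      ring
    rw [sub_mul, one_mul, hexp]
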